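/- Let S = {(x_i, y_i)}_{i=1}^n ⊆ ℝ × {−1,1} be a dataset with x_1 < x_2 < … < x_n, and suppose θ = (w, b, v) satisfies the KKT conditions of the maximum-margin problem for a width-k depth-2 ReLU network on S. Let 1 ≤ a < b ≤ n be such that x_b > x_a ≥ 0 and y_i = −1 for all a ≤ i ≤ b, and let ℐ'_{a,b} = {i : a ≤ i ≤ b, y_i N_θ(x_i) = 1} be enumerated as i_1 < … < i_m. Then there are at most 30 points in the interval [x_{i_1}, x_{i_m}] at which N_θ is not locally affine (i.e., at most 30 boundaries between linear regions in [x_{i_1}, x_{i_m}]). -/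

import Mathlib

open Finset

/-- The ReLU activation function. -/
noncomputable def relu (z : ℝ) : ℝ := max 0 z

/-- A width-`k` depth-2 ReLU network with weights `w`, biases `b`, output weights `v`. -/
noncomputable def NNet {k : ℕ} (w b v : Fin k → ℝ) (x : ℝ) : ℝ :=
  ∑ j : Fin k, v j * relu (w j * x + b j)

/-- `θ = (w, b, v)` satisfies the KKT conditions of the maximum-margin problem
for the dataset `(x i, y i)`. -/
def IsKKT {n k : ℕ} (x y : Fin n → ℝ) (w b v : Fin k → ℝ) : Prop :=
  (∀ i, 1 ≤ y i * NNet w b v (x i)) ∧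
  ∃ (lam : Fin n → ℝ) (sg : Fin n → Fin k → ℝ),
    (∀ i, 0 ≤ lam i) ∧
    (∀ i j, sg i j ∈ Set.Icc (0 : ℝ) 1) ∧
    (∀ i j, 0 < w j * x i + b j → sg i j = 1) ∧
    (∀ i j, w j * x i + b j < 0 → sg i j = 0) ∧
    (∀ i, y i * NNet w b v (x i) ≠ 1 → lam i = 0) ∧
    (∀ j, v j ≠ 0 → w j = ∑ i, lam i * y i * v j * sg i j * x i) ∧
    (∀ j, v j ≠ 0 → b j = ∑ i, lam i * y i * v j * sg i j)

/-- `f` is locally affine at `x`: it agrees with an affine function on a neighborhood of `x`. -/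
def LocallyAffineAt (f : ℝ → ℝ) (x : ℝ) : Prop :=
  ∃ c d : ℝ, ∀ᶠ z in nhds x, f z = c * z + d

/-- `x` is an activation point of the network `(w, b, v)`. -/
def IsActivationPoint {k : ℕ} (w b v : Fin k → ℝ) (x : ℝ) : Prop :=
  ∃ j : Fin k, v j ≠ 0 ∧ w j ≠ 0 ∧ w j * x + b j = 0

/-- The derivative of `f` decreases at `x`: for all sufficiently small `ε > 0`,
the derivative at `x + ε` is smaller than the derivative at `x - ε`. -/
def DerivDecreasesAt (f : ℝ → ℝ) (x : ℝ) : Prop :=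
  ∃ ε₀ > (0 : ℝ), ∀ ε : ℝ, 0 < ε → ε < ε₀ → deriv f (x + ε) < deriv f (x - ε)

/-- The derivative of `f` increases at `x`: for all sufficiently small `ε > 0`,
the derivative at `x - ε` is smaller than the derivative at `x + ε`. -/
def DerivIncreasesAt (f : ℝ → ℝ) (x : ℝ) : Prop :=
  ∃ ε₀ > (0 : ℝ), ∀ ε : ℝ, 0 < ε → ε < ε₀ → deriv f (x - ε) < deriv f (x + ε)

/-! ### Auxiliary generic lemmas -/

lemma relu_comb {p q U V : ℝ} (hp : 0 ≤ p) (hq : 0 ≤ q) :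
    relu (p * U + q * V) ≤ p * relu U + q * relu V := by
  unfold relu
  refine max_le (add_nonneg (mul_nonneg hp (le_max_left _ _)) (mul_nonneg hq (le_max_left _ _))) ?_
  exact add_le_add (mul_le_mul_of_nonneg_left (le_max_right _ _) hp)
    (mul_le_mul_of_nonneg_left (le_max_right _ _) hq)

lemma affine_concaveOn {S : Set ℝ} (hS : Convex ℝ S) {f : ℝ → ℝ} (A B : ℝ)
    (h : ∀ u ∈ S, f u = A * u + B) : ConcaveOn ℝ S f := by
  refine ⟨hS, fun u hu u' hu' p q hp hq hpq => ?_⟩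
  have hmem := hS hu hu' hp hq hpq
  rw [smul_eq_mul, smul_eq_mul] at hmem
  show p * f u + q * f u' ≤ f (p * u + q * u')
  rw [h u hu, h u' hu', h _ hmem]
  exact le_of_eq (by linear_combination B * hpq)

lemma neg_mul_relu_concaveOn {S : Set ℝ} (hS : Convex ℝ S) {v : ℝ} (w c : ℝ) (hv : v ≤ 0) :
    ConcaveOn ℝ S (fun u => v * relu (w * u + c)) := by
  refine ⟨hS, fun u hu u' hu' p q hp hq hpq => ?_⟩
  show p * (v * relu (w * u + c)) + q * (v * relu (w * u' + c))
      ≤ v * relu (w * (p * u + q * u') + c)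
  have h1 : w * (p * u + q * u') + c = p * (w * u + c) + q * (w * u' + c) := by
    linear_combination c * hpq.symm
  rw [h1]
  have h2 := relu_comb (U := w * u + c) (V := w * u' + c) hp hq
  nlinarith [mul_le_mul_of_nonpos_left h2 hv]

lemma concaveOn_finsum {ι : Type*} (s : Finset ι) {S : Set ℝ} (hS : Convex ℝ S)
    {f : ι → ℝ → ℝ} (h : ∀ i ∈ s, ConcaveOn ℝ S (f i)) :
    ConcaveOn ℝ S (fun u => ∑ i ∈ s, f i u) := by
  classical
  induction s using Finset.induction_on with
  | empty => simpa using concaveOn_const 0 hS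
  | @insert a s ha ih =>
      simp only [Finset.sum_insert ha]
      exact (h a (Finset.mem_insert_self a s)).add
        (ih fun i hi => h i (Finset.mem_insert_of_mem hi))

lemma concave_three_const {f : ℝ → ℝ} {p q r d : ℝ} (hpq : p < q) (hqr : q < r)
    (hconc : ConcaveOn ℝ (Set.Icc p r) f) (hp : f p = d) (hq : f q = d) (hr : f r = d) :
    ∀ u ∈ Set.Icc p r, f u = d := by
  intro u hu
  obtain ⟨hu1, hu2⟩ := hu
  have hpr : p < r := hpq.trans hqr
  have hple : p ∈ Set.Icc p r := ⟨le_refl p, hpr.le⟩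
  have hrle : r ∈ Set.Icc p r := ⟨hpr.le, le_refl r⟩
  have hule : u ∈ Set.Icc p r := ⟨hu1, hu2⟩
  have hlow : d ≤ f u := by
    have hrp : 0 < r - p := by linarith
    have hα : (0:ℝ) ≤ (r - u) / (r - p) := by apply div_nonneg <;> linarith
    have hβ : (0:ℝ) ≤ (u - p) / (r - p) := by apply div_nonneg <;> linarith
    have hαβ : (r - u) / (r - p) + (u - p) / (r - p) = 1 := by field_simp; ring
    have e1 := hconc.2 hple hrle hα hβ hαβ
    rw [smul_eq_mul, smul_eq_mul, smul_eq_mul, smul_eq_mul] at e1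
    have hcombo : (r - u) / (r - p) * p + (u - p) / (r - p) * r = u := by
      field_simp; ring
    rw [hcombo, hp, hr] at e1
    calc d = (r - u) / (r - p) * d + (u - p) / (r - p) * d := by
              rw [← add_mul, hαβ, one_mul]
    _ ≤ f u := e1
  have hhigh : f u ≤ d := by
    rcases le_or_gt u q with hle | hlt
    · have hur : u < r := lt_of_le_of_lt hle hqr
      have hru : 0 < r - u := by linarith
      have hα : (0:ℝ) < (r - q) / (r - u) := by apply div_pos <;> linarith
      have hβ : (0:ℝ) ≤ (q - u) / (r - u) := by apply div_nonneg <;> linarith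
      have hαβ : (r - q) / (r - u) + (q - u) / (r - u) = 1 := by field_simp; ring
      have e1 := hconc.2 hule hrle hα.le hβ hαβ
      rw [smul_eq_mul, smul_eq_mul, smul_eq_mul, smul_eq_mul] at e1
      have hcombo : (r - q) / (r - u) * u + (q - u) / (r - u) * r = q := by
        field_simp; ring
      rw [hcombo, hq, hr] at e1
      by_contra hcon
      push_neg at hcon
      have k1 : (r - q) / (r - u) * d + (q - u) / (r - u) * d = d := by
        rw [← add_mul, hαβ, one_mul]
      have k2 : (r - q) / (r - u) * d < (r - q) / (r - u) * f u :=
        mul_lt_mul_of_pos_left hcon hα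
      linarith
    · have hpu : p < u := hpq.trans hlt
      have hup : 0 < u - p := by linarith
      have hα : (0:ℝ) ≤ (u - q) / (u - p) := by apply div_nonneg <;> linarith
      have hβ : (0:ℝ) < (q - p) / (u - p) := by apply div_pos <;> linarith
      have hαβ : (u - q) / (u - p) + (q - p) / (u - p) = 1 := by field_simp; ring
      have e1 := hconc.2 hple hule hα hβ.le hαβ
      rw [smul_eq_mul, smul_eq_mul, smul_eq_mul, smul_eq_mul] at e1
      have hcombo : (u - q) / (u - p) * p + (q - p) / (u - p) * u = q := by
        field_simp; ring
      rw [hcombo, hp, hq] at e1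
      by_contra hcon
      push_neg at hcon
      have k1 : (u - q) / (u - p) * d + (q - p) / (u - p) * d = d := by
        rw [← add_mul, hαβ, one_mul]
      have k2 : (q - p) / (u - p) * d < (q - p) / (u - p) * f u :=
        mul_lt_mul_of_pos_left hcon hβ
      linarith
  linarith

lemma const_locallyAffineAt {f : ℝ → ℝ} {z p r d : ℝ} (hp : p < z) (hr : z < r)
    (h : ∀ u ∈ Set.Ioo p r, f u = d) : LocallyAffineAt f z := by
  refine ⟨0, d, ?_⟩
  filter_upwards [isOpen_Ioo.eventually_mem (⟨hp, hr⟩ : z ∈ Set.Ioo p r)] with u hu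
  rw [h u hu]; ring

lemma locallyAffineAt_finsum {k : ℕ} (f : Fin k → ℝ → ℝ) (z : ℝ)
    (h : ∀ j, ∃ cd : ℝ × ℝ, ∀ᶠ u in nhds z, f j u = cd.1 * u + cd.2) :
    LocallyAffineAt (fun u => ∑ j, f j u) z := by
  choose cd hcd using h
  refine ⟨∑ j, (cd j).1, ∑ j, (cd j).2, ?_⟩
  have hall := Filter.eventually_all.mpr hcd
  filter_upwards [hall] with u hu
  rw [Finset.sum_congr rfl fun j _ => hu j, Finset.sum_add_distrib, Finset.sum_mul]

/-- clamped enumeration of the margin points -/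
noncomputable def gfun {n m : ℕ} (x : Fin n → ℝ) (idx : Fin m → Fin n) (hm : 0 < m) (u : ℕ) :
    ℝ := x (idx ⟨min u (m-1), by omega⟩)

lemma gfun_mono {n m : ℕ} {x : Fin n → ℝ} {idx : Fin m → Fin n} (hx : StrictMono x)
    (hmono : StrictMono idx) (hm : 0 < m) {u u' : ℕ} (h : u ≤ u') :
    gfun x idx hm u ≤ gfun x idx hm u' :=
  hx.monotone (hmono.monotone (Fin.mk_le_mk.mpr (by omega)))

lemma gfun_strict {n m : ℕ} {x : Fin n → ℝ} {idx : Fin m → Fin n} (hx : StrictMono x)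
    (hmono : StrictMono idx) (hm : 0 < m) {u u' : ℕ} (h : u < u') (h2 : u' ≤ m - 1) :
    gfun x idx hm u < gfun x idx hm u' :=
  hx (hmono (Fin.mk_lt_mk.mpr (by omega)))

set_option maxHeartbeats 1000000 in
/-- With `y_i = -1` on `[a, c]` and `ℐ'_{a,c} = {i : a ≤ i ≤ c, y_i N_θ(x_i) = 1}`
enumerated by the strictly monotone `idx : Fin m → Fin n` (with `m > 0`), there are at most `30`
points in `[x_{i_1}, x_{i_m}]` at which `N_θ` is not locally affine. -/
theorem stmt9 {n k : ℕ} (x y : Fin n → ℝ)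
    (hx : StrictMono x) (hy : ∀ i, y i = 1 ∨ y i = -1)
    (w b v : Fin k → ℝ) (hKKT : IsKKT x y w b v)
    (a c : Fin n) (hac : a < c) (ha : 0 ≤ x a) (hxac : x a < x c)
    (hyac : ∀ i, a ≤ i → i ≤ c → y i = -1)
    (m : ℕ) (idx : Fin m → Fin n) (hmono : StrictMono idx)
    (hrange : ∀ i : Fin n,
      (a ≤ i ∧ i ≤ c ∧ y i * NNet w b v (x i) = 1) ↔ i ∈ Set.range idx)
    (hm : 0 < m) :
    {z ∈ Set.Icc (x (idx ⟨0, hm⟩)) (x (idx ⟨m - 1, Nat.sub_lt hm Nat.one_pos⟩)) |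
      ¬ LocallyAffineAt (NNet w b v) z}.encard ≤ 30 := by
  classical
  obtain ⟨hfeas, lam, sg, hlam0, hsgI, hsg1, hsg0, hcomp, hww, hbb⟩ := hKKT
  have hm1 : m - 1 < m := Nat.sub_lt hm Nat.one_pos
  set g : ℕ → ℝ := gfun x idx hm with hgdef
  have hg0 : g 0 = x (idx ⟨0, hm⟩) := by
    rw [hgdef]; unfold gfun
    exact congrArg x (congrArg idx (Fin.ext (by simp)))
  have hglast : g (m-1) = x (idx ⟨m - 1, Nat.sub_lt hm Nat.one_pos⟩) := by
    rw [hgdef]; unfold gfun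
    exact congrArg x (congrArg idx (Fin.ext (by simp)))
  rw [← hg0, ← hglast]
  have hgmono : ∀ {u u' : ℕ}, u ≤ u' → g u ≤ g u' := fun h => gfun_mono hx hmono hm h
  have hgstrict : ∀ {u u' : ℕ}, u < u' → u' ≤ m - 1 → g u < g u' :=
    fun h h2 => gfun_strict hx hmono hm h h2
  have hgle : ∀ u, g u ≤ g (m-1) := by
    intro u
    rw [hgdef]; unfold gfun
    exact hx.monotone (hmono.monotone (Fin.mk_le_mk.mpr (by omega)))
  have hmarg : ∀ t : Fin m, a ≤ idx t ∧ idx t ≤ c ∧ y (idx t) * NNet w b v (x (idx t)) = 1 :=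
    fun t => (hrange (idx t)).mpr ⟨t, rfl⟩
  have hNg : ∀ u : ℕ, NNet w b v (g u) = -1 := by
    intro u
    rw [hgdef]; unfold gfun
    set t : Fin m := ⟨min u (m-1), by omega⟩
    have h := hmarg t
    have hy' := hyac _ h.1 h.2.1
    have h2 := h.2.2
    rw [hy'] at h2; linarith
  have hxa_le : ∀ u : ℕ, x a ≤ g u := by
    intro u; rw [hgdef]; unfold gfun; exact hx.monotone (hmarg _).1
  have hle_xc : ∀ u : ℕ, g u ≤ x c := by
    intro u; rw [hgdef]; unfold gfun; exact hx.monotone (hmarg _).2.1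
  have hg0nn : 0 ≤ g 0 := le_trans ha (hxa_le 0)
  have hgnn : ∀ u, 0 ≤ g u := fun u => le_trans hg0nn (hgmono (Nat.zero_le u))
  have hclu : ∀ i : Fin n, g 0 ≤ x i → x i ≤ g (m-1) → a ≤ i ∧ i ≤ c := by
    intro i h1 h2
    constructor
    · by_contra hcon
      push_neg at hcon
      have := hx hcon
      linarith [hxa_le 0]
    · by_contra hcon
      push_neg at hcon
      have := hx hcon
      linarith [hle_xc (m-1)]
  have hyW : ∀ i, g 0 ≤ x i → x i ≤ g (m-1) → y i = -1 := fun i h1 h2 =>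
    hyac i (hclu i h1 h2).1 (hclu i h1 h2).2
  have hSV : ∀ i, lam i ≠ 0 → y i * NNet w b v (x i) = 1 := fun i h =>
    by_contra fun hne => h (hcomp i hne)
  have hnoSVgap : ∀ (t : ℕ) (i : Fin n), lam i ≠ 0 → g t < x i → x i < g (t+1) → False := by
    intro t i hli h1 h2
    have hiW1 : g 0 ≤ x i := le_of_lt (lt_of_le_of_lt (hgmono (Nat.zero_le t)) h1)
    have hiW2 : x i ≤ g (m-1) := le_trans h2.le (hgle (t+1))
    obtain ⟨t', ht'⟩ := (hrange i).mp ⟨(hclu i hiW1 hiW2).1, (hclu i hiW1 hiW2).2, hSV i hli⟩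
    have hisLt := t'.isLt
    rcases le_or_gt (t'.val) (min t (m-1)) with hc | hc
    · have : x (idx t') ≤ g t := by
        rw [hgdef]; unfold gfun
        refine hx.monotone (hmono.monotone ?_)
        rw [Fin.le_def]
        show (t' : ℕ) ≤ min t (m-1)
        omega
      rw [ht'] at this; linarith
    · have : g (t+1) ≤ x (idx t') := by
        rw [hgdef]; unfold gfun
        refine hx.monotone (hmono.monotone ?_)
        rw [Fin.le_def]
        show min (t+1) (m-1) ≤ (t' : ℕ)
        omega
      rw [ht'] at this; linarith
  have hEQ : ∀ j, v j ≠ 0 → ∀ ξ : ℝ, w j * ξ + b j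
      = v j * ∑ i, lam i * y i * sg i j * (x i * ξ + 1) := by
    intro j hv ξ
    rw [hww j hv, hbb j hv, Finset.sum_mul, Finset.mul_sum, ← Finset.sum_add_distrib]
    exact Finset.sum_congr rfl fun i _ => by ring
  have hostShift : ∀ (j : Fin k) (z ξ : ℝ), w j * z + b j = 0 → w j * ξ + b j = w j * (ξ - z) :=
    fun j z ξ h => by linear_combination h
  have hsgPos1 : ∀ (j : Fin k) (z : ℝ) (i : Fin n),
      0 < w j → w j * z + b j = 0 → z < x i → sg i j = 1 := by
    intro j z i hwp hz hlt
    exact hsg1 i j (by rw [hostShift j z (x i) hz]; exact mul_pos hwp (by linarith))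
  have hsgPos0 : ∀ (j : Fin k) (z : ℝ) (i : Fin n),
      0 < w j → w j * z + b j = 0 → x i < z → sg i j = 0 := by
    intro j z i hwp hz hlt
    exact hsg0 i j (by rw [hostShift j z (x i) hz]; exact mul_neg_of_pos_of_neg hwp (by linarith))
  have hsgNeg1 : ∀ (j : Fin k) (z : ℝ) (i : Fin n),
      w j < 0 → w j * z + b j = 0 → x i < z → sg i j = 1 := by
    intro j z i hwn hz hlt
    exact hsg1 i j (by rw [hostShift j z (x i) hz]; exact mul_pos_of_neg_of_neg hwn (by linarith))
  have hsgNeg0 : ∀ (j : Fin k) (z : ℝ) (i : Fin n),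
      w j < 0 → w j * z + b j = 0 → z < x i → sg i j = 0 := by
    intro j z i hwn hz hlt
    exact hsg0 i j (by rw [hostShift j z (x i) hz]; exact mul_neg_of_neg_of_pos hwn (by linarith))
  have hR : ∀ (j1 j2 : Fin k) (z1 z2 : ℝ), v j1 ≠ 0 → 0 < w j1 → w j1 * z1 + b j1 = 0 →
      v j2 ≠ 0 → 0 < w j2 → w j2 * z2 + b j2 = 0 →
      g 0 ≤ z1 → z1 < z2 → z2 ≤ g (m-1) → v j1 < 0 := by
    intro j1 j2 z1 z2 hv1 hw1 hz1 hv2 hw2 hz2 hzW1 hzlt hzW2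
    have hz1nn : (0:ℝ) ≤ z1 := le_trans hg0nn hzW1
    have hz2nn : (0:ℝ) ≤ z2 := le_trans hz1nn hzlt.le
    have hT2 : (∑ i, lam i * y i * sg i j2 * (x i * z2 + 1)) = 0 := by
      have h := hEQ j2 hv2 z2
      rw [hz2] at h
      rcases mul_eq_zero.mp h.symm with h' | h'
      · exact absurd h' hv2
      · exact h'
    have hterm : ∀ i ∈ Finset.univ (α := Fin n),
        lam i * y i * sg i j1 * (x i * z2 + 1) ≤ lam i * y i * sg i j2 * (x i * z2 + 1) := by
      intro i _
      rcases eq_or_ne (lam i) 0 with h0 | h0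
      · simp [h0]
      have hlp : 0 < lam i := lt_of_le_of_ne (hlam0 i) (Ne.symm h0)
      rcases lt_or_ge (x i) z1 with hc1 | hc1
      · rw [hsgPos0 j1 z1 i hw1 hz1 hc1, hsgPos0 j2 z2 i hw2 hz2 (hc1.trans hzlt)]
      rcases lt_or_ge z2 (x i) with hc2 | hc2
      · rw [hsgPos1 j1 z1 i hw1 hz1 (hzlt.trans hc2), hsgPos1 j2 z2 i hw2 hz2 hc2]
      have hyi : y i = -1 := hyW i (le_trans hzW1 hc1) (le_trans hc2 hzW2)
      have hxinn : (0:ℝ) ≤ x i := le_trans hz1nn hc1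
      have hpos : (0:ℝ) < x i * z2 + 1 := by nlinarith [mul_nonneg hxinn hz2nn]
      have hsgle : sg i j2 ≤ sg i j1 := by
        rcases lt_or_eq_of_le hc2 with hlt2 | heq2
        · rw [hsgPos0 j2 z2 i hw2 hz2 hlt2]; exact (hsgI i j1).1
        · rw [hsgPos1 j1 z1 i hw1 hz1 (lt_of_lt_of_le hzlt heq2.ge)]
          exact (hsgI i j2).2
      rw [hyi]
      have hmul := mul_le_mul_of_nonneg_left
        (mul_le_mul_of_nonneg_right hsgle hpos.le) hlp.le
      nlinarith [hmul]
    have hT1 : (∑ i, lam i * y i * sg i j1 * (x i * z2 + 1)) ≤ 0 :=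
      le_of_le_of_eq (Finset.sum_le_sum hterm) hT2
    have hkey : v j1 * (∑ i, lam i * y i * sg i j1 * (x i * z2 + 1)) = w j1 * (z2 - z1) := by
      rw [← hEQ j1 hv1 z2]
      exact hostShift j1 z1 z2 hz1
    have hwpos : 0 < w j1 * (z2 - z1) := mul_pos hw1 (by linarith)
    by_contra hcon
    push_neg at hcon
    have hvpos : 0 < v j1 := lt_of_le_of_ne hcon (Ne.symm hv1)
    nlinarith [mul_nonneg hvpos.le (neg_nonneg.mpr hT1)]
  have hL : ∀ (j1 j2 : Fin k) (z1 z2 : ℝ), v j1 ≠ 0 → w j1 < 0 → w j1 * z1 + b j1 = 0 →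
      v j2 ≠ 0 → w j2 < 0 → w j2 * z2 + b j2 = 0 →
      g 0 ≤ z1 → z1 < z2 → z2 ≤ g (m-1) → v j2 < 0 := by
    intro j1 j2 z1 z2 hv1 hw1 hz1 hv2 hw2 hz2 hzW1 hzlt hzW2
    have hz1nn : (0:ℝ) ≤ z1 := le_trans hg0nn hzW1
    have hT1 : (∑ i, lam i * y i * sg i j1 * (x i * z1 + 1)) = 0 := by
      have h := hEQ j1 hv1 z1
      rw [hz1] at h
      rcases mul_eq_zero.mp h.symm with h' | h'
      · exact absurd h' hv1
      · exact h'
    have hterm : ∀ i ∈ Finset.univ (α := Fin n),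
        lam i * y i * sg i j2 * (x i * z1 + 1) ≤ lam i * y i * sg i j1 * (x i * z1 + 1) := by
      intro i _
      rcases eq_or_ne (lam i) 0 with h0 | h0
      · simp [h0]
      have hlp : 0 < lam i := lt_of_le_of_ne (hlam0 i) (Ne.symm h0)
      rcases lt_or_ge (x i) z1 with hc1 | hc1
      · rw [hsgNeg1 j1 z1 i hw1 hz1 hc1, hsgNeg1 j2 z2 i hw2 hz2 (hc1.trans hzlt)]
      rcases lt_or_ge z2 (x i) with hc2 | hc2
      · rw [hsgNeg0 j1 z1 i hw1 hz1 (hzlt.trans hc2), hsgNeg0 j2 z2 i hw2 hz2 hc2]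
      have hyi : y i = -1 := hyW i (le_trans hzW1 hc1) (le_trans hc2 hzW2)
      have hxinn : (0:ℝ) ≤ x i := le_trans hz1nn hc1
      have hpos : (0:ℝ) < x i * z1 + 1 := by nlinarith [mul_nonneg hxinn hz1nn]
      have hsgle : sg i j1 ≤ sg i j2 := by
        rcases lt_or_eq_of_le hc1 with hlt1 | heq1
        · rw [hsgNeg0 j1 z1 i hw1 hz1 hlt1]; exact (hsgI i j2).1
        · rw [hsgNeg1 j2 z2 i hw2 hz2 (lt_of_le_of_lt heq1.ge hzlt)]
          exact (hsgI i j1).2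
      rw [hyi]
      have hmul := mul_le_mul_of_nonneg_left
        (mul_le_mul_of_nonneg_right hsgle hpos.le) hlp.le
      nlinarith [hmul]
    have hT2 : (∑ i, lam i * y i * sg i j2 * (x i * z1 + 1)) ≤ 0 :=
      le_of_le_of_eq (Finset.sum_le_sum hterm) hT1
    have hkey : v j2 * (∑ i, lam i * y i * sg i j2 * (x i * z1 + 1)) = w j2 * (z1 - z2) := by
      rw [← hEQ j2 hv2 z1]
      exact hostShift j2 z2 z1 hz2
    have hwpos : 0 < w j2 * (z1 - z2) := mul_pos_of_neg_of_neg hw2 (by linarith)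
    by_contra hcon
    push_neg at hcon
    have hvpos : 0 < v j2 := lt_of_le_of_ne hcon (Ne.symm hv2)
    nlinarith [mul_nonneg hvpos.le (neg_nonneg.mpr hT2)]
  have hU : ∀ (t : ℕ) (j1 j2 : Fin k) (z1 z2 : ℝ), v j1 ≠ 0 → w j1 ≠ 0 → w j1 * z1 + b j1 = 0 →
      v j2 ≠ 0 → w j2 ≠ 0 → w j2 * z2 + b j2 = 0 → (0 < w j1 ↔ 0 < w j2) →
      g t < z1 → z1 < z2 → z2 < g (t+1) → False := by
    intro t j1 j2 z1 z2 hv1 hw1 hz1 hv2 hw2 hz2 hsign hgt hzlt hltg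
    have hsame : ∀ i ∈ Finset.univ (α := Fin n),
        lam i * y i * sg i j1 * (x i * z2 + 1) = lam i * y i * sg i j2 * (x i * z2 + 1) := by
      intro i _
      rcases eq_or_ne (lam i) 0 with h0 | h0
      · rw [h0]; ring
      have hsg : sg i j1 = sg i j2 := by
        rcases lt_or_ge (x i) z1 with hc1 | hc1
        · rcases lt_or_ge 0 (w j1) with hwp | hwn
          · rw [hsgPos0 j1 z1 i hwp hz1 hc1,
              hsgPos0 j2 z2 i (hsign.mp hwp) hz2 (hc1.trans hzlt)]
          · have hwn1 : w j1 < 0 := lt_of_le_of_ne hwn hw1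
            have hwn2 : w j2 < 0 :=
              lt_of_le_of_ne (not_lt.mp (mt hsign.mpr (not_lt.mpr hwn))) hw2
            rw [hsgNeg1 j1 z1 i hwn1 hz1 hc1,
              hsgNeg1 j2 z2 i hwn2 hz2 (hc1.trans hzlt)]
        rcases lt_or_ge z2 (x i) with hc2 | hc2
        · rcases lt_or_ge 0 (w j1) with hwp | hwn
          · rw [hsgPos1 j1 z1 i hwp hz1 (hzlt.trans hc2),
              hsgPos1 j2 z2 i (hsign.mp hwp) hz2 hc2]
          · have hwn1 : w j1 < 0 := lt_of_le_of_ne hwn hw1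
            have hwn2 : w j2 < 0 :=
              lt_of_le_of_ne (not_lt.mp (mt hsign.mpr (not_lt.mpr hwn))) hw2
            rw [hsgNeg0 j1 z1 i hwn1 hz1 (hzlt.trans hc2),
              hsgNeg0 j2 z2 i hwn2 hz2 hc2]
        · exact (hnoSVgap t i h0 (lt_of_lt_of_le hgt hc1) (lt_of_le_of_lt hc2 hltg)).elim
      rw [hsg]
    have hT2 : (∑ i, lam i * y i * sg i j2 * (x i * z2 + 1)) = 0 := by
      have h := hEQ j2 hv2 z2
      rw [hz2] at h
      rcases mul_eq_zero.mp h.symm with h' | h'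
      · exact absurd h' hv2
      · exact h'
    have hT1 : (∑ i, lam i * y i * sg i j1 * (x i * z2 + 1)) = 0 :=
      (Finset.sum_congr rfl hsame).trans hT2
    have hkey : v j1 * (∑ i, lam i * y i * sg i j1 * (x i * z2 + 1)) = w j1 * (z2 - z1) := by
      rw [← hEQ j1 hv1 z2]
      exact hostShift j1 z1 z2 hz1
    rw [hT1, mul_zero] at hkey
    exact (mul_ne_zero hw1 (sub_ne_zero.mpr (ne_of_gt hzlt))) hkey.symm
  set PRs : Set ℝ :=
    {z | (g 0 ≤ z ∧ z ≤ g (m-1)) ∧ ∃ j, 0 < v j ∧ 0 < w j ∧ w j * z + b j = 0} with hPRdef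
  set PLs : Set ℝ :=
    {z | (g 0 ≤ z ∧ z ≤ g (m-1)) ∧ ∃ j, 0 < v j ∧ w j < 0 ∧ w j * z + b j = 0} with hPLdef
  have hPRsub : ∀ z1 ∈ PRs, ∀ z2 ∈ PRs, z1 = z2 := by
    intro z1 hz1m z2 hz2m
    obtain ⟨⟨hW1a, hW1b⟩, j1, hvj1, hwj1, hzj1⟩ := hz1m
    obtain ⟨⟨hW2a, hW2b⟩, j2, hvj2, hwj2, hzj2⟩ := hz2m
    by_contra hne
    rcases lt_or_gt_of_ne hne with hlt | hgt
    · exact absurd (hR j1 j2 z1 z2 (ne_of_gt hvj1) hwj1 hzj1 (ne_of_gt hvj2) hwj2 hzj2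
        hW1a hlt hW2b) (not_lt.mpr hvj1.le)
    · exact absurd (hR j2 j1 z2 z1 (ne_of_gt hvj2) hwj2 hzj2 (ne_of_gt hvj1) hwj1 hzj1
        hW2a hgt hW1b) (not_lt.mpr hvj2.le)
  have hPLsub : ∀ z1 ∈ PLs, ∀ z2 ∈ PLs, z1 = z2 := by
    intro z1 hz1m z2 hz2m
    obtain ⟨⟨hW1a, hW1b⟩, j1, hvj1, hwj1, hzj1⟩ := hz1m
    obtain ⟨⟨hW2a, hW2b⟩, j2, hvj2, hwj2, hzj2⟩ := hz2m
    by_contra hne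
    rcases lt_or_gt_of_ne hne with hlt | hgt
    · exact absurd (hL j1 j2 z1 z2 (ne_of_gt hvj1) hwj1 hzj1 (ne_of_gt hvj2) hwj2 hzj2
        hW1a hlt hW2b) (not_lt.mpr hvj2.le)
    · exact absurd (hL j2 j1 z2 z1 (ne_of_gt hvj2) hwj2 hzj2 (ne_of_gt hvj1) hwj1 hzj1
        hW2a hgt hW1b) (not_lt.mpr hvj1.le)
  set sR : ℝ := if h : PRs.Nonempty then h.choose else g 0 with hsRdef
  have hsR : ∀ s' ∈ PRs, s' = sR := by
    intro s' hs'
    have hne : PRs.Nonempty := ⟨s', hs'⟩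
    rw [hsRdef, dif_pos hne]
    exact hPRsub s' hs' _ hne.choose_spec
  set sL : ℝ := if h : PLs.Nonempty then h.choose else g 0 with hsLdef
  have hsL : ∀ s' ∈ PLs, s' = sL := by
    intro s' hs'
    have hne : PLs.Nonempty := ⟨s', hs'⟩
    rw [hsLdef, dif_pos hne]
    exact hPLsub s' hs' _ hne.choose_spec
  have hhost : ∀ z : ℝ, ¬ LocallyAffineAt (NNet w b v) z →
      ∃ j, v j ≠ 0 ∧ w j ≠ 0 ∧ w j * z + b j = 0 := by
    intro z hbad
    by_contra hno
    push_neg at hno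
    apply hbad
    have h : ∀ j : Fin k, ∃ cd : ℝ × ℝ, ∀ᶠ u in nhds z,
        v j * relu (w j * u + b j) = cd.1 * u + cd.2 := by
      intro j
      by_cases hv : v j = 0
      · exact ⟨(0, 0), Filter.Eventually.of_forall fun u => by simp [hv]⟩
      by_cases hwj : w j = 0
      · exact ⟨(0, v j * relu (b j)), Filter.Eventually.of_forall fun u => by simp [hwj]⟩
      have hne := hno j hv hwj
      have hcont : Continuous fun u : ℝ => w j * u + b j :=
        (continuous_const.mul continuous_id).add continuous_const
      rcases hne.lt_or_gt with hneg | hpos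
      · refine ⟨(0, 0), ?_⟩
        have hev := (hcont.tendsto z).eventually_lt_const hneg
        filter_upwards [hev] with u hu
        simp [relu, max_eq_left hu.le]
      · refine ⟨(v j * w j, v j * b j), ?_⟩
        have hev := (hcont.tendsto z).eventually_const_lt hpos
        filter_upwards [hev] with u hu
        unfold relu
        rw [max_eq_right hu.le]
        ring
    exact locallyAffineAt_finsum (fun j u => v j * relu (w j * u + b j)) z h
  have hstar : ∀ p q r : ℝ, g 0 ≤ p → p < q → q < r → r ≤ g (m-1) →
      NNet w b v p = -1 → NNet w b v q = -1 → NNet w b v r = -1 →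
      (∀ s' ∈ Set.Ioo p r, s' ∉ PRs ∧ s' ∉ PLs) →
      ∀ u ∈ Set.Ioo p r, NNet w b v u = -1 := by
    intro p q r hWp hpq hqr hWr hNp hNq hNr hnsp
    have hconc : ConcaveOn ℝ (Set.Icc p r) (NNet w b v) := by
      have hNdef : NNet w b v = fun u => ∑ j : Fin k, v j * relu (w j * u + b j) := rfl
      rw [hNdef]
      refine concaveOn_finsum Finset.univ (convex_Icc p r) ?_
      intro j _
      by_cases hv : v j = 0
      · exact affine_concaveOn (convex_Icc p r) 0 0 (fun u hu => by simp [hv])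
      by_cases hwj : w j = 0
      · exact affine_concaveOn (convex_Icc p r) 0 (v j * relu (b j)) (fun u hu => by simp [hwj])
      obtain ⟨zj, hzj⟩ : ∃ zj, w j * zj + b j = 0 :=
        ⟨-(b j) / (w j), by field_simp; ring⟩
      by_cases hin : p < zj ∧ zj < r
      · have hvneg : v j < 0 := by
          rcases lt_trichotomy (v j) 0 with h | h | h
          · exact h
          · exact absurd h hv
          · exfalso
            rcases lt_or_gt_of_ne (show w j ≠ 0 from hwj) with hwn | hwp
            · exact (hnsp zj ⟨hin.1, hin.2⟩).2
                ⟨⟨le_trans hWp hin.1.le, le_trans hin.2.le hWr⟩, j, h, hwn, hzj⟩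
            · exact (hnsp zj ⟨hin.1, hin.2⟩).1
                ⟨⟨le_trans hWp hin.1.le, le_trans hin.2.le hWr⟩, j, h, hwp, hzj⟩
        exact neg_mul_relu_concaveOn (convex_Icc p r) _ _ hvneg.le
      · push_neg at hin
        rcases le_or_gt zj p with hle | hgt
        · rcases lt_or_gt_of_ne (show w j ≠ 0 from hwj) with hwn | hwp
          · refine affine_concaveOn (convex_Icc p r) 0 0 (fun u hu => ?_)
            have harg : w j * u + b j ≤ 0 := by
              rw [hostShift j zj u hzj]
              nlinarith [mul_nonneg (neg_nonneg.mpr hwn.le)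
                (show (0:ℝ) ≤ u - zj by linarith [hu.1])]
            simp [relu, max_eq_left harg]
          · refine affine_concaveOn (convex_Icc p r) (v j * w j) (v j * b j) (fun u hu => ?_)
            have harg : 0 ≤ w j * u + b j := by
              rw [hostShift j zj u hzj]
              exact mul_nonneg hwp.le (by linarith [hu.1])
            unfold relu
            rw [max_eq_right harg]
            ring
        · have hge : r ≤ zj := hin hgt
          rcases lt_or_gt_of_ne (show w j ≠ 0 from hwj) with hwn | hwp
          · refine affine_concaveOn (convex_Icc p r) (v j * w j) (v j * b j) (fun u hu => ?_)
            have harg : 0 ≤ w j * u + b j := by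
              rw [hostShift j zj u hzj]
              nlinarith [mul_nonneg (neg_nonneg.mpr hwn.le)
                (show (0:ℝ) ≤ zj - u by linarith [hu.2])]
            unfold relu
            rw [max_eq_right harg]
            ring
          · refine affine_concaveOn (convex_Icc p r) 0 0 (fun u hu => ?_)
            have harg : w j * u + b j ≤ 0 := by
              rw [hostShift j zj u hzj]
              nlinarith [mul_nonneg hwp.le (show (0:ℝ) ≤ zj - u by linarith [hu.2])]
            simp [relu, max_eq_left harg]
    intro u hu
    exact concave_three_const hpq hqr hconc hNp hNq hNr u ⟨hu.1.le, hu.2.le⟩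
  set gi : ℝ → ℕ := fun z => Nat.findGreatest (fun u => g u < z) (m - 2) with hgidef
  have hgi : ∀ z : ℝ, g 0 < z → z ≤ g (m-1) →
      gi z + 1 ≤ m - 1 ∧ g (gi z) < z ∧ z ≤ g (gi z + 1) := by
    intro z h1 h2
    have hm2 : 2 ≤ m := by
      by_contra hcon
      push_neg at hcon
      have hme : m - 1 = 0 := by omega
      rw [hme] at h2
      linarith
    have hfg : Nat.findGreatest (fun u => g u < z) (m-2) ≤ m - 2 := Nat.findGreatest_le _
    have hPt : g (Nat.findGreatest (fun u => g u < z) (m-2)) < z :=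
      Nat.findGreatest_spec (P := fun u => g u < z) (Nat.zero_le _) h1
    simp only [hgidef]
    refine ⟨by omega, hPt, ?_⟩
    rcases eq_or_lt_of_le hfg with he | hl
    · rw [he, show (m-2)+1 = m-1 by omega]
      exact h2
    · have hmax := Nat.findGreatest_is_greatest (P := fun u => g u < z) (n := m - 2)
        (k := Nat.findGreatest (fun u => g u < z) (m-2) + 1) (Nat.lt_succ_self _) (by omega)
      exact le_of_not_gt hmax
  set Hp : ℕ → Set ℝ := fun t =>
    {z | (g t < z ∧ z < g (t+1)) ∧ ∃ j, v j ≠ 0 ∧ 0 < w j ∧ w j * z + b j = 0} with hHpdef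
  set Hm2 : ℕ → Set ℝ := fun t =>
    {z | (g t < z ∧ z < g (t+1)) ∧ ∃ j, v j ≠ 0 ∧ w j < 0 ∧ w j * z + b j = 0} with hHmdef
  have hgeq : ∀ t : ℕ, m - 1 ≤ t → g t = g (t+1) := by
    intro t ht
    rw [hgdef]; unfold gfun
    exact congrArg x (congrArg idx (Fin.ext (show min t (m-1) = min (t+1) (m-1) by omega)))
  have hHp1 : ∀ t, (Hp t).encard ≤ 1 := by
    intro t
    rw [Set.encard_le_one_iff]
    intro z1 z2 h1 h2
    obtain ⟨⟨ha1, hb1⟩, j1, hv1, hw1, hz1⟩ := h1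
    obtain ⟨⟨ha2, hb2⟩, j2, hv2, hw2, hz2⟩ := h2
    rcases le_or_gt (t+1) (m-1) with hok | hbad2
    · by_contra hne
      rcases lt_or_gt_of_ne hne with hlt | hgt
      · exact hU t j1 j2 z1 z2 hv1 (ne_of_gt hw1) hz1 hv2 (ne_of_gt hw2) hz2
          (iff_of_true hw1 hw2) ha1 hlt hb2
      · exact hU t j2 j1 z2 z1 hv2 (ne_of_gt hw2) hz2 hv1 (ne_of_gt hw1) hz1
          (iff_of_true hw2 hw1) ha2 hgt hb1
    · have := hgeq t (by omega)
      rw [this] at ha1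
      linarith
  have hHm1 : ∀ t, (Hm2 t).encard ≤ 1 := by
    intro t
    rw [Set.encard_le_one_iff]
    intro z1 z2 h1 h2
    obtain ⟨⟨ha1, hb1⟩, j1, hv1, hw1, hz1⟩ := h1
    obtain ⟨⟨ha2, hb2⟩, j2, hv2, hw2, hz2⟩ := h2
    rcases le_or_gt (t+1) (m-1) with hok | hbad2
    · by_contra hne
      rcases lt_or_gt_of_ne hne with hlt | hgt
      · exact hU t j1 j2 z1 z2 hv1 (ne_of_lt hw1) hz1 hv2 (ne_of_lt hw2) hz2
          (iff_of_false (not_lt.mpr hw1.le) (not_lt.mpr hw2.le)) ha1 hlt hb2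
      · exact hU t j2 j1 z2 z1 hv2 (ne_of_lt hw2) hz2 hv1 (ne_of_lt hw1) hz1
          (iff_of_false (not_lt.mpr hw2.le) (not_lt.mpr hw1.le)) ha2 hgt hb1
    · have := hgeq t (by omega)
      rw [this] at ha1
      linarith
  set blk : ℕ → Set ℝ := fun t => (Hp t ∪ Hm2 t) ∪ {g (t+1)} with hblkdef
  have hblk3 : ∀ t, (blk t).encard ≤ 3 := by
    intro t
    refine le_trans (Set.encard_union_le _ _) (le_trans (add_le_add
      (le_trans (Set.encard_union_le _ _) (add_le_add (hHp1 t) (hHm1 t)))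
      (le_of_eq (Set.encard_singleton _))) ?_)
    norm_num
  have hsub : {z ∈ Set.Icc (g 0) (g (m-1)) | ¬ LocallyAffineAt (NNet w b v) z} ⊆
      {g 0} ∪ (blk 0 ∪ (blk (m-2) ∪ (blk (gi sR - 1) ∪ (blk (gi sR) ∪ (blk (gi sR + 1) ∪
        (blk (gi sL - 1) ∪ (blk (gi sL) ∪ blk (gi sL + 1)))))))) := by
    intro z hz
    obtain ⟨hzIcc, hbad⟩ := hz
    simp only [Set.mem_union, Set.mem_singleton_iff]
    rcases eq_or_lt_of_le hzIcc.1 with he | hlt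
    · exact Or.inl he.symm
    obtain ⟨ht1, ht2, ht3⟩ := hgi z hlt hzIcc.2
    have hblkmem : ∀ t' : ℕ, g t' < z → z ≤ g (t'+1) → z ∈ blk t' := by
      intro t' hA hB
      rcases eq_or_lt_of_le hB with he2 | hl2
      · exact Or.inr he2
      · obtain ⟨j, hvj, hwj, hzj⟩ := hhost z hbad
        rcases lt_or_gt_of_ne hwj with hwn | hwp
        · exact Or.inl (Or.inr ⟨⟨hA, hl2⟩, j, hvj, hwn, hzj⟩)
        · exact Or.inl (Or.inl ⟨⟨hA, hl2⟩, j, hvj, hwp, hzj⟩)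
    by_cases h0 : gi z = 0
    · rw [h0] at ht2 ht3
      have := hblkmem 0 ht2 ht3
      tauto
    have ht1ge : 1 ≤ gi z := Nat.one_le_iff_ne_zero.mpr h0
    rcases eq_or_lt_of_le ht3 with hend | hmid
    · -- z is the right endpoint g (gi z + 1)
      by_cases hlast2 : gi z + 1 = m - 1
      · have hgieq : gi z = m - 2 := by omega
        rw [hgieq] at ht2 ht3
        have := hblkmem (m-2) ht2 ht3
        tauto
      · have ht2le : gi z + 2 ≤ m - 1 := by omega
        by_cases hsp : ∃ s', s' ∈ Set.Ioo (g (gi z)) (g (gi z + 2)) ∧ (s' ∈ PRs ∨ s' ∈ PLs)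
        · obtain ⟨s', hsIoo, hsPP⟩ := hsp
          have hsW1 : g 0 < s' := lt_of_le_of_lt (hgmono (Nat.zero_le _)) hsIoo.1
          have hsW2 : s' ≤ g (m-1) := le_trans hsIoo.2.le (hgle _)
          obtain ⟨hu1, hu2, hu3⟩ := hgi s' hsW1 hsW2
          have hub : gi s' ≤ gi z + 1 := by
            by_contra hcon
            push_neg at hcon
            have : g (gi z + 2) ≤ g (gi s') := hgmono (by omega)
            linarith [hsIoo.2]
          have hlb : gi z ≤ gi s' := by
            by_contra hcon
            push_neg at hcon
            have : g (gi s' + 1) ≤ g (gi z) := hgmono (by omega)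
            linarith [hsIoo.1]
          have hzblk : z ∈ blk (gi z) := hblkmem _ ht2 ht3
          rcases hsPP with hPR | hPL
          · have hseq := hsR s' hPR
            rw [hseq] at hub hlb
            rcases Nat.eq_or_lt_of_le hlb with he' | hl'
            · rw [he'] at hzblk
              tauto
            · have hgieq : gi z = gi sR - 1 := by omega
              rw [hgieq] at hzblk
              tauto
          · have hseq := hsL s' hPL
            rw [hseq] at hub hlb
            rcases Nat.eq_or_lt_of_le hlb with he' | hl'
            · rw [he'] at hzblk
              tauto
            · have hgieq : gi z = gi sL - 1 := by omega
              rw [hgieq] at hzblk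
              tauto
        · push_neg at hsp
          exfalso
          have hconst := hstar (g (gi z)) (g (gi z + 1)) (g (gi z + 2))
            (hgmono (Nat.zero_le _)) (hgstrict (Nat.lt_succ_self _) (by omega))
            (hgstrict (Nat.lt_succ_self _) ht2le) (hgle _)
            (hNg _) (hNg _) (hNg _) hsp
          have hzlt2 : z < g (gi z + 2) :=
            lt_of_le_of_lt hend.le (hgstrict (Nat.lt_succ_self _) ht2le)
          exact hbad (const_locallyAffineAt ht2 hzlt2 hconst)
    · -- z is strictly inside the gap (g (gi z), g (gi z + 1))
      by_cases hsp : ∃ s', s' ∈ Set.Ioo (g (gi z - 1)) (g (gi z + 1)) ∧ (s' ∈ PRs ∨ s' ∈ PLs)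
      · obtain ⟨s', hsIoo, hsPP⟩ := hsp
        have hsW1 : g 0 < s' := lt_of_le_of_lt (hgmono (Nat.zero_le _)) hsIoo.1
        have hsW2 : s' ≤ g (m-1) := le_trans hsIoo.2.le (hgle _)
        obtain ⟨hu1, hu2, hu3⟩ := hgi s' hsW1 hsW2
        have hub : gi s' ≤ gi z := by
          by_contra hcon
          push_neg at hcon
          have : g (gi z + 1) ≤ g (gi s') := hgmono (by omega)
          linarith [hsIoo.2]
        have hlb : gi z ≤ gi s' + 1 := by
          by_contra hcon
          push_neg at hcon
          have : g (gi s' + 1) ≤ g (gi z - 1) := hgmono (by omega)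
          linarith [hsIoo.1]
        have hzblk : z ∈ blk (gi z) := hblkmem _ ht2 ht3
        rcases hsPP with hPR | hPL
        · have hseq := hsR s' hPR
          rw [hseq] at hub hlb
          rcases Nat.eq_or_lt_of_le hub with he' | hl'
          · rw [← he'] at hzblk
            tauto
          · have hgieq : gi z = gi sR + 1 := by omega
            rw [hgieq] at hzblk
            tauto
        · have hseq := hsL s' hPL
          rw [hseq] at hub hlb
          rcases Nat.eq_or_lt_of_le hub with he' | hl'
          · rw [← he'] at hzblk
            tauto
          · have hgieq : gi z = gi sL + 1 := by omega
            rw [hgieq] at hzblk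
            tauto
      · push_neg at hsp
        exfalso
        have hconst := hstar (g (gi z - 1)) (g (gi z)) (g (gi z + 1))
          (hgmono (Nat.zero_le _)) (hgstrict (by omega) (by omega))
          (hgstrict (Nat.lt_succ_self _) ht1) (hgle _)
          (hNg _) (hNg _) (hNg _) hsp
        have hzgt : g (gi z - 1) < z := lt_of_le_of_lt (hgmono (by omega)) ht2
        exact hbad (const_locallyAffineAt hzgt hmid hconst)
  refine le_trans (Set.encard_mono hsub) ?_
  have hb : ∀ {A B : Set ℝ} {a' b' : ℕ∞}, A.encard ≤ a' → B.encard ≤ b' →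
      (A ∪ B).encard ≤ a' + b' := fun h1 h2 => le_trans (Set.encard_union_le _ _) (add_le_add h1 h2)
  refine le_trans (hb (le_of_eq (Set.encard_singleton _)) (hb (hblk3 _) (hb (hblk3 _)
    (hb (hblk3 _) (hb (hblk3 _) (hb (hblk3 _) (hb (hblk3 _) (hb (hblk3 _) (hblk3 _))))))))) ?_
  norm_num
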